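/- Let F = Inv ∘ (0,1,γ) on GF(2^n) with n ≥ 4, γ ∉ {0,1}, c ∉ {0,1}, γ ∉ GF(4), and suppose c = γ³/(γ+1)², Tr(1/(γ(γ+1)²)) = 0, γ⁴ + γ³ + 1 ≠ 0, and γ⁵ + γ² + 1 ≠ 0. Then the c-differential uniformity of F equals 5; specifically, with a = γ⁻¹ and b = γ/(γ²+1), the equation F(x+a) + c·F(x) = b has exactly 5 solutions. -/

import Mathlib

open scoped Classical

/-- The number of solutions `x` of `F(x+a) + c·F(x) = b`. -/
noncomputable def cdCount (n : ℕ) (F : GaloisField 2 n → GaloisField 2 n)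
    (c a b : GaloisField 2 n) : ℕ :=
  Nat.card {x : GaloisField 2 n // F (x + a) + c * F x = b}

/-- The `c`-differential uniformity of `F` (requiring `a ≠ 0` only when `c = 1`). -/
noncomputable def cdu (n : ℕ) (F : GaloisField 2 n → GaloisField 2 n)
    (c : GaloisField 2 n) : ℕ :=
  sSup {k : ℕ | ∃ a b : GaloisField 2 n, (c = 1 → a ≠ 0) ∧ k = cdCount n F c a b}

/-- The 3-cycle `(0, 1, γ)` : sends `0 ↦ 1`, `1 ↦ γ`, `γ ↦ 0`, fixes all other points. -/
noncomputable def cyc (n : ℕ) (γ : GaloisField 2 n) :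
    GaloisField 2 n → GaloisField 2 n :=
  fun x => if x = 0 then 1 else if x = 1 then γ else if x = γ then 0 else x

section Main
variable {n : ℕ} {γ : GaloisField 2 n}

lemma two_eq_zero' : (2 : GaloisField 2 n) = 0 := by
  have := CharP.cast_eq_zero (GaloisField 2 n) 2
  exact_mod_cast this

lemma F0 : (cyc n γ 0)⁻¹ = 1 := by simp [cyc]

lemma F1 : (cyc n γ 1)⁻¹ = γ⁻¹ := by
  simp [cyc, one_ne_zero]

lemma Fγ (hγ0 : γ ≠ 0) (hγ1 : γ ≠ 1) : (cyc n γ γ)⁻¹ = 0 := by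
  simp [cyc, hγ0, hγ1]

lemma Fother {x : GaloisField 2 n} (h0 : x ≠ 0) (h1 : x ≠ 1) (hγ : x ≠ γ) :
    (cyc n γ x)⁻¹ = x⁻¹ := by
  simp [cyc, h0, h1, hγ]

lemma F_eq_one (hγ1 : γ ≠ 1) {x : GaloisField 2 n} (h : (cyc n γ x)⁻¹ = 1) : x = 0 := by
  unfold cyc at h
  split_ifs at h with h0 h1 hγ
  · exact h0
  · exact absurd (inv_eq_one.mp h) hγ1
  · simp at h
  · exact absurd (inv_eq_one.mp h) h1

lemma F_eq_ginv (hγ0 : γ ≠ 0) (hγ1 : γ ≠ 1) {x : GaloisField 2 n} (h : (cyc n γ x)⁻¹ = γ⁻¹) : x = 1 := by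
  unfold cyc at h
  split_ifs at h with h0 h1 hγ
  · exact absurd (inv_injective h).symm hγ1
  · exact h1.symm ▸ rfl
  · exact absurd (inv_injective h).symm hγ0
  · exact absurd (inv_injective h) hγ

lemma F_eq_zero (hγ0 : γ ≠ 0) {x : GaloisField 2 n} (h : (cyc n γ x)⁻¹ = 0) : x = γ := by
  unfold cyc at h
  split_ifs at h with h0 h1 hγ
  · simp at h
  · exact absurd (inv_eq_zero.mp h) hγ0
  · exact hγ
  · exact absurd (inv_eq_zero.mp h) h0

lemma cyc_inj (hγ0 : γ ≠ 0) (hγ1 : γ ≠ 1) : Function.Injective (cyc n γ) := by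
  intro x y h
  unfold cyc at h
  split_ifs at h <;> simp_all

end Main

section Quad
variable {K : Type*} [Field K]

lemma quad_pair (B E Fc : K) (hFc : Fc ≠ 0) :
    ∃ u v : K, ∀ x, B * x ^ 2 + E * x + Fc = 0 → x = u ∨ x = v := by
  classical
  by_cases hB : B = 0
  · by_cases hE : E = 0
    · exact ⟨0, 0, fun x hx => absurd (by linear_combination hx - x ^ 2 * hB - x * hE) hFc⟩
    · refine ⟨-Fc / E, -Fc / E, fun x hx => Or.inl ?_⟩
      field_simp
      linear_combination hx - x ^ 2 * hB
  · by_cases hex : ∃ u v : K, u ≠ v ∧ (B * u ^ 2 + E * u + Fc = 0) ∧ (B * v ^ 2 + E * v + Fc = 0)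
    · obtain ⟨u, v, huv, hu, hv⟩ := hex
      refine ⟨u, v, fun x hx => ?_⟩
      by_cases hxu : x = u
      · exact Or.inl hxu
      by_cases hxv : x = v
      · exact Or.inr hxv
      exfalso
      have h1 : B * (u + v) + E = 0 := by
        have hne : u - v ≠ 0 := sub_ne_zero.mpr huv
        apply mul_right_cancel₀ hne
        linear_combination hu - hv
      have h2 : B * (u + x) + E = 0 := by
        have hne : u - x ≠ 0 := sub_ne_zero.mpr (Ne.symm (Ne.symm hxu)).symm
        apply mul_right_cancel₀ hne
        linear_combination hu - hx
      have : B * (v - x) = 0 := by linear_combination h1 - h2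
      rcases mul_eq_zero.1 this with h | h
      · exact hB h
      · exact hxv (by linear_combination -h : x = v)
    · by_cases hs : ∃ u : K, B * u ^ 2 + E * u + Fc = 0
      · obtain ⟨u, hu⟩ := hs
        refine ⟨u, u, fun x hx => Or.inl ?_⟩
        by_contra hne
        exact hex ⟨x, u, hne, hx, hu⟩
      · exact ⟨0, 0, fun x hx => absurd ⟨x, hx⟩ hs⟩
end Quad

section UB
variable {n : ℕ}

lemma ncard5 {K : Type*} (a b c d e : K) : ({a, b, c, d, e} : Set K).ncard ≤ 5 := by
  apply le_trans (Set.ncard_insert_le _ _)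
  have h2 : ({b, c, d, e} : Set K).ncard ≤ 4 := by
    apply le_trans (Set.ncard_insert_le _ _)
    have h3 : ({c, d, e} : Set K).ncard ≤ 3 := by
      apply le_trans (Set.ncard_insert_le _ _)
      have h4 : ({d, e} : Set K).ncard ≤ 2 := by
        apply le_trans (Set.ncard_insert_le _ _)
        simp
      omega
    omega
  omega

lemma count_le_five (γ c : GaloisField 2 n)
    (hγ0 : γ ≠ 0) (hγ1 : γ ≠ 1) (hc0 : c ≠ 0) (hc1 : c ≠ 1)
    (a b : GaloisField 2 n) :
    Nat.card {x : GaloisField 2 n // (cyc n γ (x + a))⁻¹ + c * (cyc n γ x)⁻¹ = b} ≤ 5 := by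
  classical
  set S : Set (GaloisField 2 n) :=
    {x | (cyc n γ (x + a))⁻¹ + c * (cyc n γ x)⁻¹ = b} with hSdef
  have hcard : Nat.card {x : GaloisField 2 n // (cyc n γ (x + a))⁻¹ + c * (cyc n γ x)⁻¹ = b}
      = S.ncard := Nat.card_coe_set_eq S
  rw [hcard]
  have h2 : (2 : GaloisField 2 n) = 0 := two_eq_zero'
  have h1c : (1 : GaloisField 2 n) + c ≠ 0 := by
    intro h; exact hc1 (by linear_combination h - h2)
  by_cases ha0 : a = 0
  · -- at most one solution
    rcases S.eq_empty_or_nonempty with hS | ⟨x₀, hx₀⟩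
    · simp [hS]
    · have hsub : S ⊆ {x₀} := by
        intro x hx
        simp only [hSdef, Set.mem_setOf_eq, ha0, add_zero] at hx hx₀
        have hinj : x = x₀ := by
          have hfx : (cyc n γ x)⁻¹ = (cyc n γ x₀)⁻¹ := by
            have e1 : (1 + c) * (cyc n γ x)⁻¹ = b := by linear_combination hx
            have e2 : (1 + c) * (cyc n γ x₀)⁻¹ = b := by linear_combination hx₀
            have := mul_left_cancel₀ h1c (e1.trans e2.symm)
            exact this
          exact cyc_inj hγ0 hγ1 (inv_injective hfx)
        simp [hinj]
      calc S.ncard ≤ ({x₀} : Set _).ncard := Set.ncard_le_ncard hsub (Set.toFinite _)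
        _ = 1 := Set.ncard_singleton _
        _ ≤ 5 := by omega
  · -- a ≠ 0
    have haa : a + a = 0 := by linear_combination a * h2
    have hmem : ∀ x : GaloisField 2 n,
        x ∈ S ↔ (cyc n γ (x + a))⁻¹ + c * (cyc n γ x)⁻¹ = b := fun x => Iff.rfl
    -- the three exclusive pairs
    have P1 : ¬((0 : GaloisField 2 n) ∈ S ∧ a ∈ S) := by
      rintro ⟨h0, ha⟩
      rw [hmem] at h0 ha
      rw [zero_add, F0] at h0
      rw [haa, F0] at ha
      have key : (1 + c) * ((cyc n γ a)⁻¹ + 1) = 0 := by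
        linear_combination h0 - ha + (1 + c * (cyc n γ a)⁻¹) * h2
      have hFa : (cyc n γ a)⁻¹ = 1 := by
        rcases mul_eq_zero.1 key with h | h
        · exact absurd h h1c
        · linear_combination h - h2
      exact ha0 (F_eq_one hγ1 hFa)
    have P2 : ¬((1 : GaloisField 2 n) ∈ S ∧ (a + 1) ∈ S) := by
      rintro ⟨h1, ha⟩
      rw [hmem] at h1 ha
      rw [show (1 : GaloisField 2 n) + a = a + 1 from add_comm 1 a, F1] at h1
      rw [show a + 1 + a = 1 by linear_combination a * h2, F1] at ha
      have key : (1 + c) * ((cyc n γ (a + 1))⁻¹ + γ⁻¹) = 0 := by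
        linear_combination h1 - ha + (γ⁻¹ + c * (cyc n γ (a + 1))⁻¹) * h2
      have hFa : (cyc n γ (a + 1))⁻¹ = γ⁻¹ := by
        rcases mul_eq_zero.1 key with h | h
        · exact absurd h h1c
        · linear_combination h - γ⁻¹ * h2
      have := F_eq_ginv hγ0 hγ1 hFa
      exact ha0 (by linear_combination this)
    have P3 : ¬(γ ∈ S ∧ (a + γ) ∈ S) := by
      rintro ⟨h1, ha⟩
      rw [hmem] at h1 ha
      rw [show γ + a = a + γ from add_comm γ a, Fγ hγ0 hγ1] at h1
      rw [show a + γ + a = γ by linear_combination a * h2, Fγ hγ0 hγ1] at ha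
      have key : (1 + c) * (cyc n γ (a + γ))⁻¹ = 0 := by
        linear_combination h1 - ha + (c * (cyc n γ (a + γ))⁻¹) * h2
      have hFa : (cyc n γ (a + γ))⁻¹ = 0 := by
        rcases mul_eq_zero.1 key with h | h
        · exact absurd h h1c
        · exact h
      have := F_eq_zero hγ0 hFa
      exact ha0 (by linear_combination this)
    obtain ⟨u, v, huv⟩ := quad_pair b (a * b + c + 1) (c * a) (mul_ne_zero hc0 ha0)
    set e1 : GaloisField 2 n := if (0 : GaloisField 2 n) ∈ S then 0 else a with he1
    set e2 : GaloisField 2 n := if (1 : GaloisField 2 n) ∈ S then 1 else a + 1 with he2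
    set e3 : GaloisField 2 n := if γ ∈ S then γ else a + γ with he3
    have hsub : S ⊆ ({e1, e2, e3, u, v} : Set (GaloisField 2 n)) := by
      intro x hx
      by_cases hx0 : x = 0
      · have : e1 = 0 := by rw [he1, if_pos (hx0 ▸ hx)]
        simp [this, hx0]
      by_cases hxa : x = a
      · have h0S : (0 : GaloisField 2 n) ∉ S := fun h => P1 ⟨h, hxa ▸ hx⟩
        have : e1 = a := by rw [he1, if_neg h0S]
        simp [this, hxa]
      by_cases hx1 : x = 1
      · have : e2 = 1 := by rw [he2, if_pos (hx1 ▸ hx)]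
        simp [this, hx1]
      by_cases hxa1 : x = a + 1
      · have h1S : (1 : GaloisField 2 n) ∉ S := fun h => P2 ⟨h, hxa1 ▸ hx⟩
        have : e2 = a + 1 := by rw [he2, if_neg h1S]
        simp [this, hxa1]
      by_cases hxγ : x = γ
      · have : e3 = γ := by rw [he3, if_pos (hxγ ▸ hx)]
        simp [this, hxγ]
      by_cases hxaγ : x = a + γ
      · have hγS : γ ∉ S := fun h => P3 ⟨h, hxaγ ▸ hx⟩
        have : e3 = a + γ := by rw [he3, if_neg hγS]
        simp [this, hxaγ]
      -- generic: quadratic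
      have hs0 : x + a ≠ 0 := fun h => hxa (by linear_combination h - a * h2)
      have hs1 : x + a ≠ 1 := fun h => hxa1 (by linear_combination h - a * h2)
      have hsγ : x + a ≠ γ := fun h => hxaγ (by linear_combination h - a * h2)
      have hx' : (x + a)⁻¹ + c * x⁻¹ = b := by
        rw [hmem] at hx
        rw [Fother hs0 hs1 hsγ, Fother hx0 hx1 hxγ] at hx
        exact hx
      have hq : b * x ^ 2 + (a * b + c + 1) * x + c * a = 0 := by
        field_simp at hx'
        linear_combination hx' + (b * x * a + b * x ^ 2) * h2
      rcases huv x hq with h | h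
      · simp [h]
      · simp [h]
    calc S.ncard ≤ ({e1, e2, e3, u, v} : Set (GaloisField 2 n)).ncard :=
          Set.ncard_le_ncard hsub (Set.toFinite _)
      _ ≤ 5 := ncard5 _ _ _ _ _
end UB



variable {n : ℕ}

lemma trace_sq (x : GaloisField 2 n) :
    Algebra.trace (ZMod 2) (GaloisField 2 n) (x ^ 2) = Algebra.trace (ZMod 2) (GaloisField 2 n) x := by
  have h1 := trace_eq_sum_automorphisms (K := ZMod 2) (x ^ 2)
  have h2 := trace_eq_sum_automorphisms (K := ZMod 2) x
  have h3 : ∑ σ : GaloisField 2 n ≃ₐ[ZMod 2] GaloisField 2 n, σ (x ^ 2)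
      = (∑ σ : GaloisField 2 n ≃ₐ[ZMod 2] GaloisField 2 n, σ x) ^ 2 := by
    rw [sum_pow_char 2]
    simp [map_pow]
  have h4 : algebraMap (ZMod 2) (GaloisField 2 n) (Algebra.trace (ZMod 2) (GaloisField 2 n) (x ^ 2))
      = algebraMap (ZMod 2) (GaloisField 2 n) (Algebra.trace (ZMod 2) (GaloisField 2 n) x) := by
    rw [h1, h3, ← h2, ← map_pow, ZMod.pow_card]
  exact (algebraMap (ZMod 2) (GaloisField 2 n)).injective h4

lemma artin_schreier (hn : n ≠ 0) (d : GaloisField 2 n)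
    (hd : Algebra.trace (ZMod 2) (GaloisField 2 n) d = 0) :
    ∃ y : GaloisField 2 n, y ^ 2 + y = d := by
  classical
  set ψ : GaloisField 2 n →ₗ[ZMod 2] GaloisField 2 n :=
    { toFun := fun x => x ^ 2 + x
      map_add' := by
        intro x y
        show (x + y) ^ 2 + (x + y) = (x ^ 2 + x) + (y ^ 2 + y)
        rw [add_pow_char]
        ring
      map_smul' := by
        intro m x
        show (m • x) ^ 2 + m • x = m • (x ^ 2 + x)
        rw [smul_pow, ZMod.pow_card, smul_add] } with hψ
  have hker : LinearMap.ker ψ = Submodule.span (ZMod 2) {(1 : GaloisField 2 n)} := by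
    ext x
    simp only [LinearMap.mem_ker, Submodule.mem_span_singleton, hψ, LinearMap.coe_mk,
      AddHom.coe_mk]
    constructor
    · intro hx
      have : x * (x + 1) = 0 := by ring_nf; linear_combination hx
      rcases mul_eq_zero.1 this with h | h
      · exact ⟨0, by simp [h]⟩
      · refine ⟨1, ?_⟩
        have : x = 1 := by
          have h2 : (2 : GaloisField 2 n) = 0 := by
            have := CharP.cast_eq_zero (GaloisField 2 n) 2; exact_mod_cast this
          linear_combination h - h2
        simp [this]
    · rintro ⟨r, rfl⟩
      show (r • (1 : GaloisField 2 n)) ^ 2 + r • 1 = 0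
      rw [smul_pow, ZMod.pow_card, one_pow, CharTwo.add_self_eq_zero]
  have hkrank : Module.finrank (ZMod 2) (LinearMap.ker ψ) = 1 := by
    rw [hker]; exact finrank_span_singleton one_ne_zero
  have hT := (Algebra.trace (ZMod 2) (GaloisField 2 n))
  set T := Algebra.trace (ZMod 2) (GaloisField 2 n) with hTdef
  have hTrange : LinearMap.range T = ⊤ := by
    rcases Ideal.eq_bot_or_top (LinearMap.range T : Ideal (ZMod 2)) with h | h
    · exfalso
      exact Algebra.trace_ne_zero (ZMod 2) (GaloisField 2 n) (LinearMap.range_eq_bot.1 h)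
    · exact h
  have hTrank : Module.finrank (ZMod 2) (LinearMap.ker T) = n - 1 := by
    have := LinearMap.finrank_range_add_finrank_ker T
    rw [hTrange, GaloisField.finrank 2 hn] at this
    simp only [finrank_top] at this
    have h1 : Module.finrank (ZMod 2) (ZMod 2) = 1 := Module.finrank_self _
    omega
  have hψrank : Module.finrank (ZMod 2) (LinearMap.range ψ) = n - 1 := by
    have := LinearMap.finrank_range_add_finrank_ker ψ
    rw [hkrank, GaloisField.finrank 2 hn] at this
    omega
  have hle : LinearMap.range ψ ≤ LinearMap.ker T := by
    rintro _ ⟨x, rfl⟩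
    simp only [LinearMap.mem_ker, hψ, LinearMap.coe_mk, AddHom.coe_mk]
    rw [map_add, trace_sq]
    show T x + T x = 0
    have : (2 : ZMod 2) = 0 := rfl
    linear_combination T x * this
  have heq : LinearMap.range ψ = LinearMap.ker T :=
    Submodule.eq_of_le_of_finrank_le hle (by rw [hTrank, hψrank])
  have : d ∈ LinearMap.range ψ := by rw [heq]; exact hd
  rcases this with ⟨y, hy⟩
  exact ⟨y, hy⟩
section Count
variable {n : ℕ}

lemma count_eq_five (hn : 4 ≤ n) (γ c : GaloisField 2 n)
    (hγ0 : γ ≠ 0) (hγ1 : γ ≠ 1) (hc0 : c ≠ 0) (hc1 : c ≠ 1)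
    (hγ4 : γ ^ 2 + γ + 1 ≠ 0)
    (hceq : c = γ ^ 3 / (γ + 1) ^ 2)
    (htr : Algebra.trace (ZMod 2) (GaloisField 2 n) (1 / (γ * (γ + 1) ^ 2)) = 0)
    (hp1 : γ ^ 4 + γ ^ 3 + 1 ≠ 0)
    (hp2 : γ ^ 5 + γ ^ 2 + 1 ≠ 0) :
    Nat.card {x : GaloisField 2 n //
      (cyc n γ (x + γ⁻¹))⁻¹ + c * (cyc n γ x)⁻¹ = γ / (γ ^ 2 + 1)} = 5 := by
  classical
  have h2 : (2 : GaloisField 2 n) = 0 := two_eq_zero'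
  have hγ1' : γ + 1 ≠ 0 := fun h => hγ1 (by linear_combination h - h2)
  have hγ21 : γ ^ 2 + 1 ≠ 0 := by
    intro h
    exact hγ1' (pow_eq_zero_iff two_ne_zero |>.mp
      (show (γ + 1) ^ 2 = 0 by linear_combination h + γ * h2))
  have hq3 : γ ^ 3 + γ ^ 2 + 1 ≠ 0 := by
    intro h
    apply hc1
    rw [hceq, div_eq_one_iff_eq (pow_ne_zero 2 hγ1')]
    linear_combination h - (γ ^ 2 + γ + 1) * h2
  have hn0 : n ≠ 0 := by omega
  obtain ⟨y, hy⟩ := artin_schreier hn0 _ htr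
  rw [one_div] at hy
  have hy' : (y ^ 2 + y) * (γ * (γ + 1) ^ 2) = 1 := by
    rw [hy]; field_simp
  clear hy
  set r1 : GaloisField 2 n := γ * (γ + 1) * y with hr1def
  set r2 : GaloisField 2 n := r1 + γ * (γ + 1) with hr2def
  have hr1 : r1 ^ 2 + γ * (γ + 1) * r1 + γ = 0 := by
    linear_combination γ * hy' + γ * h2
  have hr2 : r2 ^ 2 + γ * (γ + 1) * r2 + γ = 0 := by
    linear_combination hr1 + (γ * (γ + 1) * r1 + γ ^ 2 * (γ + 1) ^ 2) * h2
  have hr12 : r1 ≠ r2 := by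
    intro h
    rw [hr2def] at h
    have : γ * (γ + 1) = 0 := by linear_combination -h
    exact (mul_ne_zero hγ0 hγ1') this
  have hainv : γ⁻¹ * γ = 1 := inv_mul_cancel₀ hγ0
  have rprops : ∀ r : GaloisField 2 n, r ^ 2 + γ * (γ + 1) * r + γ = 0 →
      r ≠ 0 ∧ r ≠ 1 ∧ r ≠ γ ∧ r ≠ γ⁻¹ ∧ r ≠ γ⁻¹ + 1 ∧ r ≠ γ⁻¹ + γ := by
    intro r hr
    refine ⟨?_, ?_, ?_, ?_, ?_, ?_⟩
    · intro h
      rw [h] at hr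
      exact hγ0 (by linear_combination hr)
    · intro h
      rw [h] at hr
      exact hγ1' (pow_eq_zero_iff two_ne_zero |>.mp
        (show (γ + 1) ^ 2 = 0 by linear_combination hr))
    · intro h
      rw [h] at hr
      exact mul_ne_zero hγ0 (pow_ne_zero 2 hγ1') (show γ * (γ + 1) ^ 2 = 0 by linear_combination hr)
    · intro h
      rw [h] at hr
      field_simp at hr
      exact hγ1' (pow_eq_zero_iff two_ne_zero |>.mp
        (show (γ + 1) ^ 2 = 0 by linear_combination hr + (γ - γ ^ 3) * h2))
    · intro h
      rw [h] at hr
      field_simp at hr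
      have hkey : γ * (γ ^ 4 + γ ^ 3 + 1) = 0 := by
        linear_combination γ * hr - (γ ^ 2 + γ ^ 3 + γ ^ 4) * h2
      exact hp1 ((mul_eq_zero.mp hkey).resolve_left hγ0)
    · intro h
      rw [h] at hr
      field_simp at hr
      have hkey : γ * (γ ^ 5 + γ ^ 2 + 1) = 0 := by
        linear_combination γ * hr - (γ ^ 3 + γ ^ 4 + γ ^ 5) * h2
      exact hp2 ((mul_eq_zero.mp hkey).resolve_left hγ0)
  -- basic exclusions for γ⁻¹
  have hai0 : γ⁻¹ ≠ 0 := inv_ne_zero hγ0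
  have hai1 : γ⁻¹ ≠ 1 := fun h => hγ1 (inv_eq_one.mp h)
  have haiγ : γ⁻¹ ≠ γ := by
    intro h
    have h1 : γ * γ = 1 := by nth_rewrite 1 [← h]; exact inv_mul_cancel₀ hγ0
    exact hγ1' (pow_eq_zero_iff two_ne_zero |>.mp
      (show (γ + 1) ^ 2 = 0 by linear_combination h1 + (γ + 1) * h2))
  -- F-values
  have hFa : (cyc n γ γ⁻¹)⁻¹ = γ := by rw [Fother hai0 hai1 haiγ, inv_inv]
  have hb1eq : (1 : GaloisField 2 n) + γ⁻¹ = (γ + 1) / γ := by field_simp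
  have hb1ne0 : (1 : GaloisField 2 n) + γ⁻¹ ≠ 0 := by
    rw [hb1eq]; exact div_ne_zero hγ1' hγ0
  have hb1ne1 : (1 : GaloisField 2 n) + γ⁻¹ ≠ 1 := by
    rw [hb1eq]
    intro h
    rw [div_eq_one_iff_eq hγ0] at h
    exact one_ne_zero (α := GaloisField 2 n) (by linear_combination h)
  have hb1neγ : (1 : GaloisField 2 n) + γ⁻¹ ≠ γ := by
    rw [hb1eq]
    intro h
    rw [div_eq_iff hγ0] at h
    exact hγ4 (by linear_combination -h + (γ + 1) * h2)
  have hFb1 : (cyc n γ ((1 : GaloisField 2 n) + γ⁻¹))⁻¹ = γ / (γ + 1) := by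
    rw [Fother hb1ne0 hb1ne1 hb1neγ, hb1eq, inv_div]
  have hbγeq : γ + γ⁻¹ = (γ ^ 2 + 1) / γ := by field_simp
  have hbγne0 : γ + γ⁻¹ ≠ 0 := by rw [hbγeq]; exact div_ne_zero hγ21 hγ0
  have hbγne1 : γ + γ⁻¹ ≠ 1 := by
    rw [hbγeq]
    intro h
    rw [div_eq_one_iff_eq hγ0] at h
    exact hγ4 (by linear_combination h + γ * h2)
  have hbγneγ : γ + γ⁻¹ ≠ γ := by
    rw [hbγeq]
    intro h
    rw [div_eq_iff hγ0] at h
    exact one_ne_zero (α := GaloisField 2 n) (by linear_combination h)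
  have hFbγ : (cyc n γ (γ + γ⁻¹))⁻¹ = γ / (γ ^ 2 + 1) := by
    rw [Fother hbγne0 hbγne1 hbγneγ, hbγeq, inv_div]
  -- the solution set
  set S : Set (GaloisField 2 n) :=
    {x | (cyc n γ (x + γ⁻¹))⁻¹ + c * (cyc n γ x)⁻¹ = γ / (γ ^ 2 + 1)} with hSdef
  have hmem : ∀ x : GaloisField 2 n,
      x ∈ S ↔ (cyc n γ (x + γ⁻¹))⁻¹ + c * (cyc n γ x)⁻¹ = γ / (γ ^ 2 + 1) := fun x => Iff.rfl
  -- memberships of 0, 1, γ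
  have hS0 : (0 : GaloisField 2 n) ∈ S := by
    rw [hmem, zero_add, hFa, F0, hceq]
    field_simp
    ring_nf
    linear_combination (γ ^ 2 + γ ^ 3 + γ ^ 4) * h2
  have hS1 : (1 : GaloisField 2 n) ∈ S := by
    rw [hmem, hFb1, F1, hceq]
    field_simp
    ring_nf
    linear_combination γ ^ 3 * h2
  have hSγ : γ ∈ S := by
    rw [hmem, hFbγ, Fγ hγ0 hγ1]
    simp
  -- membership of the roots
  have hSr : ∀ r : GaloisField 2 n, r ^ 2 + γ * (γ + 1) * r + γ = 0 → r ∈ S := by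
    intro r hr
    obtain ⟨h0, h1, hγr, ha, ha1, haγ⟩ := rprops r hr
    have hra0 : r + γ⁻¹ ≠ 0 := fun h => ha (by linear_combination h - γ⁻¹ * h2)
    have hra1 : r + γ⁻¹ ≠ 1 := fun h => ha1 (by linear_combination h - γ⁻¹ * h2)
    have hraγ : r + γ⁻¹ ≠ γ := fun h => haγ (by linear_combination h - γ⁻¹ * h2)
    rw [hmem, Fother hra0 hra1 hraγ, Fother h0 h1 hγr, hceq]
    have hrγ1 : r * γ + 1 ≠ 0 := by
      intro h
      have : r * γ = 1 := by linear_combination h - h2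
      exact ha (eq_inv_of_mul_eq_one_left (by linear_combination this))
    have hrweq : r + γ⁻¹ = (r * γ + 1) / γ := by field_simp
    rw [hrweq, inv_div]
    have hrγ1' : γ * r + 1 ≠ 0 := by rwa [mul_comm]
    field_simp
    linear_combination ((-1)*γ^1 + (-2)*γ^2 + (-1)*γ^3) * hr + ((1)*γ^2 + (1)*γ^2*r^1 + (1)*γ^3 + (3)*γ^3*r^1 + (1)*γ^4 + (2)*γ^4*r^1 + (1)*γ^5*r^1) * h2
  -- non-memberships
  have hnSa : γ⁻¹ ∉ S := by
    rw [hmem]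
    intro h
    rw [show γ⁻¹ + γ⁻¹ = 0 by linear_combination γ⁻¹ * h2, F0, hFa, hceq] at h
    field_simp at h
    have key : (γ + 1) ^ 3 * (γ ^ 3 + γ ^ 2 + 1) = 0 := by
      linear_combination h + (γ + 2*γ^2 + 2*γ^3 + 2*γ^4 + 2*γ^5) * h2
    rcases mul_eq_zero.mp key with h' | h'
    · exact hγ1' (pow_eq_zero_iff three_ne_zero |>.mp h')
    · exact hq3 h'
  have hnSa1 : γ⁻¹ + 1 ∉ S := by
    rw [hmem]
    intro h
    rw [show γ⁻¹ + 1 + γ⁻¹ = 1 by linear_combination γ⁻¹ * h2,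
      show γ⁻¹ + (1 : GaloisField 2 n) = 1 + γ⁻¹ by ring, hFb1, F1, hceq] at h
    field_simp at h
    have key : (γ + 1) ^ 2 * ((γ ^ 2 + γ + 1) * (γ ^ 3 + γ ^ 2 + 1)) = 0 := by
      linear_combination h + (γ^2 + 3*γ^3 + 4*γ^4 + 3*γ^5 + 2*γ^6) * h2
    rcases mul_eq_zero.mp key with h' | h'
    · exact hγ1' (pow_eq_zero_iff two_ne_zero |>.mp h')
    · rcases mul_eq_zero.mp h' with h'' | h''
      · exact hγ4 h''
      · exact hq3 h''
  have hnSaγ : γ⁻¹ + γ ∉ S := by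
    rw [hmem]
    intro h
    rw [show γ⁻¹ + γ + γ⁻¹ = γ by linear_combination γ⁻¹ * h2, Fγ hγ0 hγ1,
      show γ⁻¹ + γ = γ + γ⁻¹ by ring, hFbγ] at h
    have hbne : γ / (γ ^ 2 + 1) ≠ 0 := div_ne_zero hγ0 hγ21
    have hkey : c * (γ / (γ ^ 2 + 1)) = 1 * (γ / (γ ^ 2 + 1)) := by linear_combination h
    exact hc1 (mul_right_cancel₀ hbne hkey)
  -- factorization of the quadratic
  have hfac : ∀ x : GaloisField 2 n, x ^ 2 + γ * (γ + 1) * x + γ = 0 → x = r1 ∨ x = r2 := by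
    intro x hx
    have hprod : (x + r1) * (x + r2) = 0 := by
      linear_combination hx + hr1 + (x + r1) * hr2def + (r1 * x - γ) * h2
    rcases mul_eq_zero.mp hprod with h | h
    · left; linear_combination h - r1 * h2
    · right; linear_combination h - r2 * h2
  have hSsub : S ⊆ ({0, 1, γ, r1, r2} : Set (GaloisField 2 n)) := by
    intro x hx
    by_cases h0 : x = 0
    · simp [h0]
    by_cases h1 : x = 1
    · simp [h1]
    by_cases hγx : x = γ
    · simp [hγx]
    by_cases ha : x = γ⁻¹
    · exact absurd (ha ▸ hx) hnSa
    by_cases ha1 : x = γ⁻¹ + 1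
    · exact absurd (ha1 ▸ hx) hnSa1
    by_cases haγ : x = γ⁻¹ + γ
    · exact absurd (haγ ▸ hx) hnSaγ
    have hxa0 : x + γ⁻¹ ≠ 0 := fun h => ha (by linear_combination h - γ⁻¹ * h2)
    have hxa1 : x + γ⁻¹ ≠ 1 := fun h => ha1 (by linear_combination h - γ⁻¹ * h2)
    have hxaγ : x + γ⁻¹ ≠ γ := fun h => haγ (by linear_combination h - γ⁻¹ * h2)
    rw [hmem, Fother hxa0 hxa1 hxaγ, Fother h0 h1 hγx, hceq] at hx
    have hxγ1 : x * γ + 1 ≠ 0 := by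
      intro h
      have hh : x * γ = 1 := by linear_combination h - h2
      exact ha (eq_inv_of_mul_eq_one_left (by linear_combination hh))
    rw [show x + γ⁻¹ = (x * γ + 1) / γ by field_simp, inv_div] at hx
    have hxγ1' : γ * x + 1 ≠ 0 := by rwa [mul_comm]
    field_simp at hx
    have key : γ ^ 2 * (γ + 1) ^ 2 * (x ^ 2 + γ * (γ + 1) * x + γ) = 0 := by
      linear_combination γ * hx + ((1)*γ^2*x^2 + (2)*γ^3*x^2 + (1)*γ^4 + (1)*γ^4*x^2 + (1)*γ^5*x^1) * h2
    have hne : γ ^ 2 * (γ + 1) ^ 2 ≠ 0 :=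
      mul_ne_zero (pow_ne_zero 2 hγ0) (pow_ne_zero 2 hγ1')
    have hroot := (mul_eq_zero.mp key).resolve_left hne
    rcases hfac x hroot with h | h
    · simp [h]
    · simp [h]
  have hSeq : S = ({0, 1, γ, r1, r2} : Set (GaloisField 2 n)) := by
    refine Set.Subset.antisymm hSsub ?_
    intro x hx
    simp only [Set.mem_insert_iff, Set.mem_singleton_iff] at hx
    rcases hx with rfl | rfl | rfl | rfl | rfl
    · exact hS0
    · exact hS1
    · exact hSγ
    · exact hSr r1 hr1
    · exact hSr r2 hr2
  have hcard : Nat.card {x : GaloisField 2 n //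
      (cyc n γ (x + γ⁻¹))⁻¹ + c * (cyc n γ x)⁻¹ = γ / (γ ^ 2 + 1)} = S.ncard :=
    Nat.card_coe_set_eq S
  rw [hcard, hSeq]
  obtain ⟨h10, h11, h1γ, -, -, -⟩ := rprops r1 hr1
  obtain ⟨h20, h21, h2γ, -, -, -⟩ := rprops r2 hr2
  rw [Set.ncard_insert_of_notMem (by
    simp only [Set.mem_insert_iff, Set.mem_singleton_iff, not_or]
    exact ⟨zero_ne_one, fun h => hγ0 h.symm, fun h => h10 h.symm, fun h => h20 h.symm⟩)]
  rw [Set.ncard_insert_of_notMem (by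
    simp only [Set.mem_insert_iff, Set.mem_singleton_iff, not_or]
    exact ⟨fun h => hγ1 h.symm, fun h => h11 h.symm, fun h => h21 h.symm⟩)]
  rw [Set.ncard_insert_of_notMem (by
    simp only [Set.mem_insert_iff, Set.mem_singleton_iff, not_or]
    exact ⟨fun h => h1γ h.symm, fun h => h2γ h.symm⟩)]
  rw [Set.ncard_insert_of_notMem (by
    simp only [Set.mem_singleton_iff]
    exact hr12)]
  rw [Set.ncard_singleton]
end Count

theorem stmt_19 (n : ℕ) (hn : 4 ≤ n) (γ c : GaloisField 2 n)
    (hγ0 : γ ≠ 0) (hγ1 : γ ≠ 1) (hc0 : c ≠ 0) (hc1 : c ≠ 1)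
    (hγ4 : γ ^ 2 + γ + 1 ≠ 0)
    (hceq : c = γ ^ 3 / (γ + 1) ^ 2)
    (htr : Algebra.trace (ZMod 2) (GaloisField 2 n) (1 / (γ * (γ + 1) ^ 2)) = 0)
    (hp1 : γ ^ 4 + γ ^ 3 + 1 ≠ 0)
    (hp2 : γ ^ 5 + γ ^ 2 + 1 ≠ 0)
    (F : GaloisField 2 n → GaloisField 2 n) (hF : F = fun x => (cyc n γ x)⁻¹) :
    cdu n F c = 5 ∧
      cdCount n F c γ⁻¹ (γ / (γ ^ 2 + 1)) = 5 := by
  subst hF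
  have hcount : cdCount n (fun x => (cyc n γ x)⁻¹) c γ⁻¹ (γ / (γ ^ 2 + 1)) = 5 :=
    count_eq_five hn γ c hγ0 hγ1 hc0 hc1 hγ4 hceq htr hp1 hp2
  have hle : ∀ a b : GaloisField 2 n,
      cdCount n (fun x => (cyc n γ x)⁻¹) c a b ≤ 5 := fun a b =>
    count_le_five γ c hγ0 hγ1 hc0 hc1 a b
  refine ⟨?_, hcount⟩
  unfold cdu
  apply le_antisymm
  · apply csSup_le
    · exact ⟨5, γ⁻¹, γ / (γ ^ 2 + 1), fun h => absurd h hc1, hcount.symm⟩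
    · rintro k ⟨a, b, -, rfl⟩
      exact hle a b
  · apply le_csSup
    · refine ⟨5, ?_⟩
      rintro k ⟨a, b, -, rfl⟩
      exact hle a b
    · exact ⟨γ⁻¹, γ / (γ ^ 2 + 1), fun h => absurd h hc1, hcount.symm⟩
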